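/- arXiv:1411.7457 — 2 statements merged into one kernel-verified Lean document; each statement's English description precedes it below -/
import Mathlib

section
/- Let K be an n×n Hermitian complex matrix. Then trace(K²) is a nonnegative real number and |det(I + iK)|² ≥ 1 + trace(K²). -/
open Matrix Finset

lemma aux_prod {ι : Type*} (s : Finset ι) (f : ι → ℝ) (hf : ∀ i, 0 ≤ f i) :
    1 + ∑ i ∈ s, f i ≤ ∏ i ∈ s, (1 + f i) := by
  classical
  induction s using Finset.induction with
  | empty => simp
  | @insert a s h ih =>
    rw [Finset.sum_insert h, Finset.prod_insert h]
    have h1 : (0:ℝ) ≤ ∑ i ∈ s, f i := Finset.sum_nonneg fun i _ ↦ hf i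
    have h2 : (1:ℝ) + ∑ i ∈ s, f i ≤ ∏ i ∈ s, (1 + f i) := ih
    nlinarith [hf a]

theorem stmt_12 (n : ℕ) (K : Matrix (Fin n) (Fin n) ℂ) (hK : K.IsHermitian) :
    ((K ^ 2).trace).im = 0 ∧ 0 ≤ ((K ^ 2).trace).re ∧
    ‖(1 + Complex.I • K).det‖ ^ 2 ≥ 1 + ((K ^ 2).trace).re := by
  set U : Matrix (Fin n) (Fin n) ℂ := (hK.eigenvectorUnitary : Matrix (Fin n) (Fin n) ℂ) with hUdef
  set lam := hK.eigenvalues with hlam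
  have hU : U * star U = 1 := Matrix.mem_unitaryGroup_iff.mp hK.eigenvectorUnitary.2
  have hU' : star U * U = 1 := Matrix.mem_unitaryGroup_iff'.mp hK.eigenvectorUnitary.2
  have hspec : K = U * Matrix.diagonal (Complex.ofReal ∘ lam) * star U := hK.spectral_theorem
  have htr : (K ^ 2).trace = ∑ i, (lam i : ℂ) ^ 2 := by
    rw [pow_two, hspec]
    rw [show U * diagonal (Complex.ofReal ∘ lam) * star U * (U * diagonal (Complex.ofReal ∘ lam) * star U)
      = U * (diagonal (Complex.ofReal ∘ lam) * diagonal (Complex.ofReal ∘ lam)) * star U by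
        have hmid : star U * (U * (diagonal (Complex.ofReal ∘ lam) * star U))
            = diagonal (Complex.ofReal ∘ lam) * star U := by
          rw [← Matrix.mul_assoc, hU', Matrix.one_mul]
        simp only [Matrix.mul_assoc, hmid]]
    rw [Matrix.trace_mul_cycle, ← Matrix.mul_assoc, hU', Matrix.one_mul,
      Matrix.diagonal_mul_diagonal, Matrix.trace_diagonal]
    simp [pow_two]
  have hdiag : Matrix.diagonal (fun i => 1 + Complex.I * lam i)
      = 1 + Complex.I • Matrix.diagonal (Complex.ofReal ∘ lam) := by
    ext i j
    by_cases h : i = j <;> simp [h, Matrix.one_apply, Matrix.diagonal]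
  have hdet : (1 + Complex.I • K).det = ∏ i, (1 + Complex.I * lam i) := by
    have h1 : (1 : Matrix (Fin n) (Fin n) ℂ) + Complex.I • K
        = U * Matrix.diagonal (fun i => 1 + Complex.I * lam i) * star U := by
      rw [hdiag, hspec]
      rw [Matrix.mul_add, Matrix.add_mul, Matrix.mul_one, hU, Matrix.mul_smul, Matrix.smul_mul,
        Matrix.mul_assoc]
    rw [h1, Matrix.det_mul, Matrix.det_mul, mul_comm, ← mul_assoc, ← Matrix.det_mul, hU',
      Matrix.det_one, one_mul, Matrix.det_diagonal]
  have habs : ‖(1 + Complex.I • K).det‖ ^ 2 = ∏ i, (1 + lam i ^ 2) := by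
    rw [hdet, ← Complex.normSq_eq_norm_sq, map_prod Complex.normSq]
    congr 1; ext i
    simp [Complex.normSq_apply]
    ring
  have hre : ((K ^ 2).trace).re = ∑ i, lam i ^ 2 := by
    rw [htr]; simp [← Complex.ofReal_pow]
  refine ⟨by rw [htr]; simp [← Complex.ofReal_pow], ?_, ?_⟩
  · rw [hre]; positivity
  · rw [habs, hre]
    exact aux_prod Finset.univ (fun i => lam i ^ 2) (fun i => sq_nonneg _)
end

section
/- Let A and B be n×n Hermitian positive semidefinite complex matrices and t ∈ [0,1], and let C := (1−t)·A + t·B (which is Hermitian positive semidefinite). Then ∑_{j=1}^n arctan( λ_j(C) ) ≥ (1−t) · ∑_{j=1}^n arctan( λ_j(A) ) + t · ∑_{j=1}^n arctan( λ_j(B) ), where λ_1(M), …, λ_n(M) denote the real eigenvalues (with multiplicity) of a Hermitian matrix M given by the spectral theorem. -/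
open scoped ComplexOrder

lemma arctan_concaveOn : ConcaveOn ℝ (Set.Ici 0) Real.arctan := by
  have hderiv : ∀ x : ℝ, HasDerivAt (deriv Real.arctan) (-(2*x) / (1+x^2)^2) x := by
    intro x
    have h1 : HasDerivAt (fun x : ℝ => 1 + x^2) (2*x) x := by
      simpa using ((hasDerivAt_pow 2 x).const_add 1)
    have hne : (1 : ℝ) + x^2 ≠ 0 := by positivity
    have := h1.inv hne
    simp only [Real.deriv_arctan]
    exact this.congr_of_eventuallyEq (Filter.Eventually.of_forall fun y => by simp)
  apply concaveOn_of_deriv2_nonpos (convex_Ici 0) Real.continuous_arctan.continuousOn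
  · exact fun x _ => (Real.differentiable_arctan x).differentiableWithinAt
  · exact fun x _ => (hderiv x).differentiableAt.differentiableWithinAt
  · intro x hx
    rw [interior_Ici] at hx
    have h2 : deriv^[2] Real.arctan x = -(2*x) / (1+x^2)^2 := by
      rw [Function.iterate_succ, Function.iterate_one, Function.comp_apply,
        (hderiv x).deriv]
    rw [h2]
    have h3 : (0:ℝ) < (1+x^2)^2 := by positivity
    have hx' : (0:ℝ) ≤ x := le_of_lt hx
    apply div_nonpos_of_nonpos_of_nonneg <;> nlinarith

open Matrix in
lemma peierls {n : ℕ} (W : Matrix (Fin n) (Fin n) ℂ)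
    (hW : W ∈ Matrix.unitaryGroup (Fin n) ℂ) (μ : Fin n → ℝ) (hμ : ∀ k, 0 ≤ μ k) :
    ∑ k, Real.arctan (μ k) ≤ ∑ j, Real.arctan (∑ k, Complex.normSq (W k j) * μ k) := by
  have hconc := arctan_concaveOn
  have hcol : ∀ j, ∑ k, Complex.normSq (W k j) = 1 := by
    intro j
    have h1 : (star W * W) j j = 1 := by
      rw [(Matrix.mem_unitaryGroup_iff').mp hW]; simp
    have h2 : ∑ k, (starRingEnd ℂ) (W k j) * W k j = 1 := by
      simpa [Matrix.mul_apply, Matrix.star_apply] using h1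
    have := congrArg Complex.re h2
    simpa [Complex.normSq_apply, Complex.re_sum] using this
  have hrow : ∀ k, ∑ j, Complex.normSq (W k j) = 1 := by
    intro k
    have h1 : (W * star W) k k = 1 := by
      rw [(Matrix.mem_unitaryGroup_iff).mp hW]; simp
    have h2 : ∑ j, W k j * (starRingEnd ℂ) (W k j) = 1 := by
      simpa [Matrix.mul_apply, Matrix.star_apply] using h1
    have := congrArg Complex.re h2
    simpa [Complex.mul_conj, Complex.re_sum] using this
  calc ∑ k, Real.arctan (μ k)
      = ∑ k, (∑ j, Complex.normSq (W k j)) * Real.arctan (μ k) := by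
        simp [hrow]
    _ = ∑ j, ∑ k, Complex.normSq (W k j) * Real.arctan (μ k) := by
        rw [Finset.sum_comm]; simp [Finset.sum_mul]
    _ ≤ ∑ j, Real.arctan (∑ k, Complex.normSq (W k j) * μ k) := by
        apply Finset.sum_le_sum
        intro j _
        have := hconc.le_map_sum (t := Finset.univ) (w := fun k => Complex.normSq (W k j))
          (p := μ) (fun k _ => Complex.normSq_nonneg _) (hcol j) (fun k _ => hμ k)
        simpa [smul_eq_mul] using this

open Matrix in
lemma psd_smul' {n : ℕ} {M : Matrix (Fin n) (Fin n) ℂ} (hM : M.PosSemidef) {r : ℝ}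
    (hr : 0 ≤ r) : (r • M).PosSemidef := by
  constructor
  · unfold Matrix.IsHermitian
    rw [Matrix.conjTranspose_smul, hM.1, star_trivial]
  · intro x
    exact (hM.smul hr).2 x

open Matrix in
lemma diag_entry {n : ℕ} {M : Matrix (Fin n) (Fin n) ℂ} (hM : M.PosSemidef)
    (V : Matrix (Fin n) (Fin n) ℂ) (hV : V ∈ Matrix.unitaryGroup (Fin n) ℂ) :
    ∃ W ∈ Matrix.unitaryGroup (Fin n) ℂ, ∀ j,
      ((star V * M * V) j j).re
        = ∑ k, Complex.normSq (W k j) * hM.isHermitian.eigenvalues k := by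
  set U : Matrix (Fin n) (Fin n) ℂ := ↑(hM.isHermitian.eigenvectorUnitary) with hU
  have hUmem : U ∈ Matrix.unitaryGroup (Fin n) ℂ := hM.isHermitian.eigenvectorUnitary.prop
  refine ⟨star U * V, mul_mem (Unitary.star_mem hUmem) hV, fun j => ?_⟩
  set W : Matrix (Fin n) (Fin n) ℂ := star U * V with hW
  set D : Matrix (Fin n) (Fin n) ℂ :=
    Matrix.diagonal (RCLike.ofReal ∘ hM.isHermitian.eigenvalues) with hD
  have hspec : M = U * D * star U := hM.isHermitian.spectral_theorem
  have key : star V * M * V = star W * D * W := by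
    rw [hspec, hW, StarMul.star_mul, star_star]
    noncomm_ring
  rw [key]
  have hentry : (star W * D * W) j j
      = ∑ k, (starRingEnd ℂ) (W k j) * ((hM.isHermitian.eigenvalues k : ℂ) * W k j) := by
    rw [Matrix.mul_assoc, Matrix.mul_apply]
    congr 1
    ext k
    rw [Matrix.diagonal_mul, Matrix.star_apply]
    simp
  rw [hentry, Complex.re_sum]
  congr 1
  ext k
  have h4 : (starRingEnd ℂ) (W k j) * ((hM.isHermitian.eigenvalues k : ℂ) * W k j)
      = ((Complex.normSq (W k j) * hM.isHermitian.eigenvalues k : ℝ) : ℂ) := by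
    rw [mul_comm, mul_assoc, Complex.mul_conj]
    push_cast
    ring
  rw [h4, Complex.ofReal_re]

theorem stmt_14 (n : ℕ) (A B : Matrix (Fin n) (Fin n) ℂ)
    (hA : A.PosSemidef) (hB : B.PosSemidef) (t : ℝ) (ht₀ : 0 ≤ t) (ht₁ : t ≤ 1) :
    ∃ hC : ((1 - t) • A + t • B).PosSemidef,
      ∑ j : Fin n, Real.arctan (hC.isHermitian.eigenvalues j) ≥
        (1 - t) * ∑ j : Fin n, Real.arctan (hA.isHermitian.eigenvalues j) +
          t * ∑ j : Fin n, Real.arctan (hB.isHermitian.eigenvalues j) := by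
  have hC : ((1 - t) • A + t • B).PosSemidef :=
    (psd_smul' hA (by linarith)).add (psd_smul' hB ht₀)
  refine ⟨hC, ?_⟩
  set C : Matrix (Fin n) (Fin n) ℂ := (1 - t) • A + t • B with hCdef
  set V : Matrix (Fin n) (Fin n) ℂ := ↑(hC.isHermitian.eigenvectorUnitary) with hV
  have hVmem : V ∈ Matrix.unitaryGroup (Fin n) ℂ := hC.isHermitian.eigenvectorUnitary.prop
  have hdiagC : star V * C * V
      = Matrix.diagonal (RCLike.ofReal ∘ hC.isHermitian.eigenvalues) :=
    by have h := hC.isHermitian.conjStarAlgAut_star_eigenvectorUnitary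
       rw [Unitary.conjStarAlgAut_star_apply] at h
       exact h
  obtain ⟨WA, hWAmem, hfA⟩ := diag_entry hA V hVmem
  obtain ⟨WB, hWBmem, hfB⟩ := diag_entry hB V hVmem
  set a : Fin n → ℝ := fun j => ((star V * A * V) j j).re with ha
  set b : Fin n → ℝ := fun j => ((star V * B * V) j j).re with hb
  have ha0 : ∀ j, 0 ≤ a j := by
    intro j
    rw [ha]
    simp only [hfA j]
    exact Finset.sum_nonneg fun k _ =>
      mul_nonneg (Complex.normSq_nonneg _) (hA.eigenvalues_nonneg k)
  have hb0 : ∀ j, 0 ≤ b j := by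
    intro j
    rw [hb]
    simp only [hfB j]
    exact Finset.sum_nonneg fun k _ =>
      mul_nonneg (Complex.normSq_nonneg _) (hB.eigenvalues_nonneg k)
  have hsplit : ∀ j, hC.isHermitian.eigenvalues j = (1 - t) * a j + t * b j := by
    intro j
    have h1 : star V * C * V
        = (1 - t) • (star V * A * V) + t • (star V * B * V) := by
      rw [hCdef, Matrix.mul_add, Matrix.add_mul, Matrix.mul_smul, Matrix.smul_mul,
        Matrix.mul_smul, Matrix.smul_mul]
    have h2 := congrArg (fun M : Matrix (Fin n) (Fin n) ℂ => (M j j).re) (h1.symm.trans hdiagC)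
    simpa [Matrix.add_apply, Matrix.smul_apply, Complex.add_re, Complex.smul_re] using h2.symm
  have hjensen : ∀ j, (1 - t) * Real.arctan (a j) + t * Real.arctan (b j)
      ≤ Real.arctan (hC.isHermitian.eigenvalues j) := by
    intro j
    have := arctan_concaveOn.2 (ha0 j) (hb0 j) (by linarith : (0:ℝ) ≤ 1 - t) ht₀ (by ring)
    rw [hsplit j]
    simpa [smul_eq_mul] using this
  have hPA : ∑ k, Real.arctan (hA.isHermitian.eigenvalues k) ≤ ∑ j, Real.arctan (a j) := by
    have := peierls WA hWAmem (hA.isHermitian.eigenvalues) (fun k => hA.eigenvalues_nonneg k)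
    calc ∑ k, Real.arctan (hA.isHermitian.eigenvalues k)
        ≤ ∑ j, Real.arctan (∑ k, Complex.normSq (WA k j) * hA.isHermitian.eigenvalues k) :=
          this
      _ = ∑ j, Real.arctan (a j) := by
          apply Finset.sum_congr rfl
          intro j _
          rw [ha]
          simp only [hfA j]
  have hPB : ∑ k, Real.arctan (hB.isHermitian.eigenvalues k) ≤ ∑ j, Real.arctan (b j) := by
    have := peierls WB hWBmem (hB.isHermitian.eigenvalues) (fun k => hB.eigenvalues_nonneg k)
    calc ∑ k, Real.arctan (hB.isHermitian.eigenvalues k)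
        ≤ ∑ j, Real.arctan (∑ k, Complex.normSq (WB k j) * hB.isHermitian.eigenvalues k) :=
          this
      _ = ∑ j, Real.arctan (b j) := by
          apply Finset.sum_congr rfl
          intro j _
          rw [hb]
          simp only [hfB j]
  calc (1 - t) * ∑ j : Fin n, Real.arctan (hA.isHermitian.eigenvalues j)
        + t * ∑ j : Fin n, Real.arctan (hB.isHermitian.eigenvalues j)
      ≤ (1 - t) * ∑ j, Real.arctan (a j) + t * ∑ j, Real.arctan (b j) :=
        add_le_add (mul_le_mul_of_nonneg_left hPA (by linarith))
          (mul_le_mul_of_nonneg_left hPB ht₀)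
    _ = ∑ j, ((1 - t) * Real.arctan (a j) + t * Real.arctan (b j)) := by
        rw [Finset.sum_add_distrib, Finset.mul_sum, Finset.mul_sum]
    _ ≤ ∑ j : Fin n, Real.arctan (hC.isHermitian.eigenvalues j) :=
        Finset.sum_le_sum fun j _ => hjensen j
end
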